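/- Let X ⊆ Y ⊆ Z ⊆ M.E. If X is closed in Y (X ≤ Y) and Y is closed in Z (Y ≤ Z), then X is closed in Z (X ≤ Z). -/

import Mathlib

open Set

/-- The relative rank `relRank(X, X ∪ A)` of a finite set `A` over a set `X`: the least
cardinality of a subset `A₀` of `A` with `A ⊆ closure (X ∪ A₀)`. -/
noncomputable def mRelRk {V : Type*} (M : Matroid V) (X A : Set V) : ℕ :=
  sInf {n : ℕ | ∃ A₀ : Set V, A₀ ⊆ A ∧ A₀.ncard = n ∧ A ⊆ M.closure (X ∪ A₀)}

/-- The relative predimension `δ(A/X) = relRank(X, X ∪ A) - α·|(A ∩ P) \ X|` of a finite set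
`A` over a set `X`, where `P` is the set of colored elements. -/
noncomputable def mDeltaRel {V : Type*} (M : Matroid V) (P : Set V) (α : ℝ)
    (A X : Set V) : ℝ :=
  (mRelRk M X A : ℝ) - α * (((A ∩ P) \ X).ncard : ℝ)

/-- `X` is closed (self-sufficient) in `Y`, written `X ≤ Y`: `X ⊆ Y` and `δ(A/X) ≥ 0` for
every finite `A ⊆ Y`. -/
def SelfSuffIn {V : Type*} (M : Matroid V) (P : Set V) (α : ℝ) (X Y : Set V) : Prop :=
  X ⊆ Y ∧ ∀ A : Set V, A ⊆ Y → A.Finite → 0 ≤ mDeltaRel M P α A X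

section Aux

variable {V : Type*} {M : Matroid V} {X X' A B : Set V}

lemma mRelRk_set_nonempty (hA : A ⊆ M.E) :
    {n : ℕ | ∃ A₀ : Set V, A₀ ⊆ A ∧ A₀.ncard = n ∧ A ⊆ M.closure (X ∪ A₀)}.Nonempty :=
  ⟨A.ncard, A, Subset.rfl, rfl, M.subset_closure_of_subset' subset_union_right hA⟩

/-- There is a minimal witness set realizing `mRelRk`. -/
lemma mRelRk_exists (hA : A ⊆ M.E) (hfin : A.Finite) :
    ∃ A₀ : Set V, A₀ ⊆ A ∧ A₀.ncard = mRelRk M X A ∧ A ⊆ M.closure (X ∪ A₀) ∧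
      ∀ b ∈ A₀, b ∉ M.closure (X ∪ (A₀ \ {b})) := by
  obtain ⟨A₀, hA₀A, hcard0, hcl⟩ := Nat.sInf_mem (mRelRk_set_nonempty (X := X) hA)
  have hcard : A₀.ncard = mRelRk M X A := hcard0
  refine ⟨A₀, hA₀A, hcard, hcl, fun b hb hbcl => ?_⟩
  have hA₀fin : A₀.Finite := hfin.subset hA₀A
  have hins : X ∪ A₀ = insert b (X ∪ (A₀ \ {b})) := by
    ext x
    by_cases hx : x = b <;> simp [hx, hb]
  have hcl' : A ⊆ M.closure (X ∪ (A₀ \ {b})) := by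
    rw [hins, M.closure_insert_eq_of_mem_closure hbcl] at hcl
    exact hcl
  have hle : mRelRk M X A ≤ (A₀ \ {b}).ncard :=
    Nat.sInf_le ⟨A₀ \ {b}, (diff_subset).trans hA₀A, rfl, hcl'⟩
  have hlt : (A₀ \ {b}).ncard < A₀.ncard := ncard_diff_singleton_lt_of_mem hb hA₀fin
  omega

lemma mRelRk_le_of_witness (hA₀A : B ⊆ A) (hcl : A ⊆ M.closure (X ∪ B)) :
    mRelRk M X A ≤ B.ncard :=
  Nat.sInf_le ⟨B, hA₀A, rfl, hcl⟩

lemma mRelRk_mono_left (hA : A ⊆ M.E) (h : X ⊆ X') : mRelRk M X' A ≤ mRelRk M X A := by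
  obtain ⟨A₀, hA₀A, hcard0, hcl⟩ := Nat.sInf_mem (mRelRk_set_nonempty (X := X) hA)
  have hcard : A₀.ncard = mRelRk M X A := hcard0
  rw [← hcard]
  exact mRelRk_le_of_witness hA₀A
    (hcl.trans (M.closure_subset_closure (union_subset_union_left _ h)))

lemma indep_union_of_forall {I : Set V} (hI : M.Indep I) (hBfin : B.Finite) (hBE : B ⊆ M.E)
    (h : ∀ b ∈ B, b ∉ M.closure (I ∪ (B \ {b}))) : M.Indep (I ∪ B) := by
  revert hBE h
  refine Set.Finite.induction_on _ hBfin (fun _ _ => by simpa using hI) ?_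
  intro b s hbs hsfin IH hBE h
  have hsE : s ⊆ M.E := (subset_insert _ _).trans hBE
  have hIs : M.Indep (I ∪ s) := by
    refine IH hsE fun b' hb' hb'cl => h b' (mem_insert_of_mem _ hb') ?_
    exact M.closure_subset_closure
      (union_subset_union_right _ (diff_subset_diff_left (subset_insert _ _))) hb'cl
  have hbcl : b ∉ M.closure (I ∪ s) := by
    have := h b (mem_insert _ _)
    rwa [insert_diff_self_of_notMem hbs] at this
  have hbIs : b ∉ I ∪ s := fun hmem =>
    hbcl (M.inter_ground_subset_closure (I ∪ s) ⟨hmem, hBE (mem_insert _ _)⟩)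
  have key : M.Indep (insert b (I ∪ s)) :=
    (hIs.insert_indep_iff_of_notMem hbIs).2 ⟨hBE (mem_insert _ _), hbcl⟩
  exact key.subset Set.union_insert.subset

lemma closure_union_eq_closure_union_of_basis (hI : M.IsBasis I (X ∩ M.E)) (S : Set V) :
    M.closure (X ∪ S) = M.closure (I ∪ S) := by
  rw [← M.closure_union_closure_left_eq X S, ← M.closure_inter_ground X,
    ← hI.closure_eq_closure, M.closure_union_closure_left_eq]

/-- The key superadditivity: `relRank(X, X∪A) ≥ relRank(X, X∪B) + relRank(X∪B, X∪A)`
for `B ⊆ A`. -/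
lemma mRelRk_superadd (hA : A ⊆ M.E) (hfin : A.Finite) (hBA : B ⊆ A) :
    mRelRk M X B + mRelRk M (X ∪ B) A ≤ mRelRk M X A := by
  classical
  have hB : B ⊆ M.E := hBA.trans hA
  have hBfin : B.Finite := hfin.subset hBA
  -- a minimal witness for A over X
  obtain ⟨A₀, hA₀A, hA₀card, hA₀cl, -⟩ := mRelRk_exists (X := X) hA hfin
  have hA₀fin : A₀.Finite := hfin.subset hA₀A
  have hA₀E : A₀ ⊆ M.E := hA₀A.trans hA
  -- a minimal witness for B over X
  obtain ⟨B₁, hB₁B, hB₁card, hB₁cl, hB₁min⟩ := mRelRk_exists (X := X) hB hBfin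
  have hB₁E : B₁ ⊆ M.E := hB₁B.trans hB
  have hB₁fin : B₁.Finite := hBfin.subset hB₁B
  -- B₁ is disjoint from X
  have hB₁X : ∀ b ∈ B₁, b ∉ X := by
    intro b hb hbX
    exact hB₁min b hb
      (M.inter_ground_subset_closure _ ⟨Or.inl hbX, hB₁E hb⟩)
  -- a basis I of X ∩ M.E
  obtain ⟨I, hI⟩ := M.exists_isBasis (X ∩ M.E) inter_subset_right
  have hIX : I ⊆ X ∩ M.E := hI.subset
  have hclXS : ∀ S : Set V, M.closure (X ∪ S) = M.closure (I ∪ S) :=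
    closure_union_eq_closure_union_of_basis hI
  -- I ∪ B₁ is independent
  have hIB₁ : M.Indep (I ∪ B₁) := by
    refine indep_union_of_forall hI.indep hB₁fin hB₁E fun b hb => ?_
    rw [← hclXS]
    exact hB₁min b hb
  have hIB₁disj : Disjoint I B₁ :=
    disjoint_left.2 fun a haI haB₁ => hB₁X a haB₁ (hIX haI).1
  -- the big set W
  set W : Set V := (X ∪ B₁ ∪ A₀) ∩ M.E with hW
  have hWE : W ⊆ M.E := inter_subset_right
  have hIB₁W : I ∪ B₁ ⊆ W := by
    rintro x (hx | hx)
    · exact ⟨Or.inl (Or.inl (hIX hx).1), (hIX hx).2⟩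
    · exact ⟨Or.inl (Or.inr hx), hB₁E hx⟩
  -- extend I ∪ B₁ to a basis J of W
  obtain ⟨J, hJ, hIBJ⟩ := hIB₁.subset_isBasis_of_subset hIB₁W hWE
  -- W is spanned by X ∪ A₀
  have hWcl : W ⊆ M.closure (X ∪ A₀) := by
    rintro x ⟨(hx | hx) | hx, hxE⟩
    · exact M.inter_ground_subset_closure _ ⟨Or.inl hx, hxE⟩
    · exact hA₀cl (hBA (hB₁B hx))
    · exact M.inter_ground_subset_closure _ ⟨Or.inr hx, hxE⟩
  -- extend I to a basis K of (X ∪ A₀) ∩ M.E, which is also a basis of W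
  obtain ⟨K, hK, hIK⟩ := hI.indep.subset_isBasis_of_subset
    (hIX.trans (inter_subset_inter_left _ subset_union_left)) (inter_subset_right (s := X ∪ A₀))
  have hKclEq : M.closure K = M.closure (X ∪ A₀) := by
    rw [hK.closure_eq_closure, M.closure_inter_ground]
  have hKW : M.IsBasis K W := by
    refine hK.indep.isBasis_of_subset_of_subset_closure
      (hK.subset.trans (inter_subset_inter_left _
        (union_subset_union_left _ subset_union_left))) ?_
    rw [hKclEq]; exact hWcl
  -- elements of J and K outside I are not in X
  have hnotX : ∀ {L : Set V}, M.Indep L → I ⊆ L → ∀ x ∈ L, x ∉ I → x ∉ X := by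
    intro L hL hIL x hxL hxI hxX
    have hxcl : x ∈ M.closure I := hI.subset_closure ⟨hxX, hL.subset_ground hxL⟩
    have : M.Indep (insert x I) := hL.subset (insert_subset hxL hIL)
    rw [hI.indep.insert_indep_iff_of_notMem hxI] at this
    exact this.2 hxcl
  have hIJ : I ⊆ J := (subset_union_left).trans hIBJ
  have hJdiff : J \ I ⊆ B₁ ∪ A₀ := by
    rintro x ⟨hxJ, hxI⟩
    obtain ⟨(hx | hx) | hx, -⟩ := hJ.subset hxJ
    · exact absurd hx (hnotX hJ.indep hIJ x hxJ hxI)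
    · exact Or.inl hx
    · exact Or.inr hx
  have hKdiff : K \ I ⊆ A₀ := by
    rintro x ⟨hxK, hxI⟩
    obtain ⟨(hx | hx), -⟩ := hK.subset hxK
    · exact absurd hx (hnotX hK.indep hIK x hxK hxI)
    · exact hx
  have hJdfin : (J \ I).Finite := (hB₁fin.union hA₀fin).subset hJdiff
  have hKdfin : (K \ I).Finite := hA₀fin.subset hKdiff
  -- |J \ I| = |K \ I| via base exchange in M ↾ W
  have hbJ : (M.restrict W).IsBase J := hJ.isBase_restrict
  have hbK : (M.restrict W).IsBase K := hKW.isBase_restrict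
  have hdiffeq : (J \ K).ncard = (K \ J).ncard := hbJ.ncard_diff_comm hbK
  have hsplitJ : (J \ I).ncard = (J \ K).ncard + ((J ∩ K) \ I).ncard := by
    rw [← ncard_union_eq ?_ (hJdfin.subset ?_) (hJdfin.subset ?_)]
    · congr 1
      ext x
      constructor
      · rintro ⟨hxJ, hxI⟩
        by_cases hxK : x ∈ K
        · exact Or.inr ⟨⟨hxJ, hxK⟩, hxI⟩
        · exact Or.inl ⟨hxJ, hxK⟩
      · rintro (⟨hxJ, hxK⟩ | ⟨⟨hxJ, -⟩, hxI⟩)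
        · exact ⟨hxJ, fun hxI => hxK (hIK hxI)⟩
        · exact ⟨hxJ, hxI⟩
    · exact disjoint_left.2 fun a ⟨_, haK⟩ ⟨⟨_, haK'⟩, _⟩ => haK haK'
    · exact fun x ⟨hxJ, hxK⟩ => ⟨hxJ, fun hxI => hxK (hIK hxI)⟩
    · exact fun x ⟨⟨hxJ, _⟩, hxI⟩ => ⟨hxJ, hxI⟩
  have hsplitK : (K \ I).ncard = (K \ J).ncard + ((J ∩ K) \ I).ncard := by
    rw [← ncard_union_eq ?_ (hKdfin.subset ?_) (hKdfin.subset ?_)]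
    · congr 1
      ext x
      constructor
      · rintro ⟨hxK, hxI⟩
        by_cases hxJ : x ∈ J
        · exact Or.inr ⟨⟨hxJ, hxK⟩, hxI⟩
        · exact Or.inl ⟨hxK, hxJ⟩
      · rintro (⟨hxK, hxJ⟩ | ⟨⟨-, hxK⟩, hxI⟩)
        · exact ⟨hxK, fun hxI => hxJ (hIJ hxI)⟩
        · exact ⟨hxK, hxI⟩
    · exact disjoint_left.2 fun a ⟨_, haJ⟩ ⟨⟨haJ', _⟩, _⟩ => haJ haJ'
    · exact fun x ⟨hxK, hxJ⟩ => ⟨hxK, fun hxI => hxJ (hIJ hxI)⟩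
    · exact fun x ⟨⟨_, hxK⟩, hxI⟩ => ⟨hxK, hxI⟩
  have hJKcard : (J \ I).ncard = (K \ I).ncard := by rw [hsplitJ, hsplitK, hdiffeq]
  -- the second witness set A₂
  set A₂ : Set V := J \ (I ∪ B₁) with hA₂
  have hA₂A₀ : A₂ ⊆ A₀ := by
    rintro x ⟨hxJ, hxIB⟩
    rcases hJdiff ⟨hxJ, fun h => hxIB (Or.inl h)⟩ with h | h
    · exact absurd h (fun h => hxIB (Or.inr h))
    · exact h
  -- J \ I = B₁ ∪ A₂ disjointly
  have hJIsplit : J \ I = B₁ ∪ A₂ := by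
    ext x
    constructor
    · rintro ⟨hxJ, hxI⟩
      by_cases hxB : x ∈ B₁
      · exact Or.inl hxB
      · exact Or.inr ⟨hxJ, fun h => h.elim hxI hxB⟩
    · rintro (hx | ⟨hxJ, hxIB⟩)
      · exact ⟨hIBJ (Or.inr hx), disjoint_right.1 hIB₁disj hx⟩
      · exact ⟨hxJ, fun h => hxIB (Or.inl h)⟩
  have hB₁A₂disj : Disjoint B₁ A₂ :=
    disjoint_left.2 fun a ha ⟨_, hnot⟩ => hnot (Or.inr ha)
  have hcard1 : (J \ I).ncard = B₁.ncard + A₂.ncard := by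
    rw [hJIsplit, ncard_union_eq hB₁A₂disj hB₁fin (hA₀fin.subset hA₂A₀)]
  -- A₂ is a witness for A over X ∪ B
  have hA₂wit : A ⊆ M.closure ((X ∪ B) ∪ A₂) := by
    have hJcl : M.closure J = M.closure W := hJ.closure_eq_closure
    have hWcl' : M.closure W = M.closure (X ∪ B₁ ∪ A₀) := by
      rw [hW, M.closure_inter_ground]
    have h1 : A ⊆ M.closure W := by
      rw [hWcl']
      exact hA₀cl.trans (M.closure_subset_closure
        (union_subset_union_left _ subset_union_left))
    have h2 : J ⊆ (X ∪ B) ∪ A₂ := by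
      intro x hxJ
      by_cases hxIB : x ∈ I ∪ B₁
      · rcases hxIB with h | h
        · exact Or.inl (Or.inl (hIX h).1)
        · exact Or.inl (Or.inr (hB₁B h))
      · exact Or.inr ⟨hxJ, hxIB⟩
    calc A ⊆ M.closure W := h1
    _ = M.closure J := hJcl.symm
    _ ⊆ M.closure ((X ∪ B) ∪ A₂) := M.closure_subset_closure h2
  have hr2 : mRelRk M (X ∪ B) A ≤ A₂.ncard :=
    mRelRk_le_of_witness (hA₂A₀.trans hA₀A) hA₂wit
  have hKcard : (K \ I).ncard ≤ A₀.ncard := ncard_le_ncard hKdiff hA₀fin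
  omega

end Aux

/-- Transitivity of closedness: if `X ⊆ Y ⊆ Z ⊆ M.E`, `X` is closed in `Y` and `Y` is closed
in `Z`, then `X` is closed in `Z`. -/
theorem bicolored_selfSuff_trans {V : Type*} (M : Matroid V) (P : Set V) (α : ℝ)
    (X Y Z : Set V) (hXY : X ⊆ Y) (hYZ : Y ⊆ Z) (hZ : Z ⊆ M.E)
    (h1 : SelfSuffIn M P α X Y) (h2 : SelfSuffIn M P α Y Z) :
    SelfSuffIn M P α X Z := by
  refine ⟨hXY.trans hYZ, fun A hAZ hfin => ?_⟩
  have hAE : A ⊆ M.E := hAZ.trans hZ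
  have hd1 : 0 ≤ mDeltaRel M P α (A ∩ Y) X :=
    h1.2 (A ∩ Y) inter_subset_right (hfin.subset inter_subset_left)
  have hd2 : 0 ≤ mDeltaRel M P α A Y := h2.2 A hAZ hfin
  -- rank superadditivity
  have hrk : mRelRk M X (A ∩ Y) + mRelRk M Y A ≤ mRelRk M X A := by
    have h1' : mRelRk M X (A ∩ Y) + mRelRk M (X ∪ (A ∩ Y)) A ≤ mRelRk M X A :=
      mRelRk_superadd hAE hfin inter_subset_left
    have h2' : mRelRk M Y A ≤ mRelRk M (X ∪ (A ∩ Y)) A :=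
      mRelRk_mono_left hAE (union_subset hXY inter_subset_right)
    omega
  -- colored-count additivity
  have hcard : (((A ∩ Y) ∩ P) \ X).ncard + ((A ∩ P) \ Y).ncard = ((A ∩ P) \ X).ncard := by
    rw [← ncard_union_eq ?_ (hfin.subset ?_) (hfin.subset ?_)]
    · congr 1
      ext x
      constructor
      · rintro (⟨⟨⟨hxA, -⟩, hxP⟩, hxX⟩ | ⟨hx, hxY⟩)
        · exact ⟨⟨hxA, hxP⟩, hxX⟩
        · exact ⟨hx, fun hxX => hxY (hXY hxX)⟩
      · rintro ⟨⟨hxA, hxP⟩, hxX⟩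
        by_cases hxY : x ∈ Y
        · exact Or.inl ⟨⟨⟨hxA, hxY⟩, hxP⟩, hxX⟩
        · exact Or.inr ⟨⟨hxA, hxP⟩, hxY⟩
    · exact disjoint_left.2 fun a ha ha' => ha'.2 ha.1.1.2
    · exact fun x hx => hx.1.1.1
    · exact fun x hx => hx.1.1
  simp only [mDeltaRel] at hd1 hd2 ⊢
  have hrk' : (mRelRk M X (A ∩ Y) : ℝ) + (mRelRk M Y A : ℝ) ≤ (mRelRk M X A : ℝ) := by
    exact_mod_cast hrk
  have hcard' : ((((A ∩ Y) ∩ P) \ X).ncard : ℝ) + (((A ∩ P) \ Y).ncard : ℝ)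
      = (((A ∩ P) \ X).ncard : ℝ) := by exact_mod_cast hcard
  rw [← hcard', mul_add]
  linarith [hd1, hd2, hrk']
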